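/- arXiv:2503.09545 — 8 statements merged into one kernel-verified Lean document; each statement's English description precedes it below -/
import Mathlib

section
/- Theorem 1 (completeness of the commit compilation): if the STRIPS planning task P = ⟨F, A, I, G⟩ has a plan, then the commit planning task P_c = ⟨F ∪ F', A_c, I, G_c⟩ also has a plan. -/
/-- A STRIPS action: positive/negative preconditions, add/delete effects, nonnegative cost. -/
structure StripsAction (α : Type*) where
  prePos : Set α
  preNeg : Set α
  add : Set α
  del : Set α
  cost : NNReal

variable {α : Type*}

/-- An action is applicable in state `s` iff `pre⁺ ⊆ s` and `pre⁻ ∩ s = ∅`. -/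
def StripsAction.Applicable (a : StripsAction α) (s : Set α) : Prop :=
  a.prePos ⊆ s ∧ a.preNeg ∩ s = ∅

/-- Result of applying an action: `γ(s,a) = (s \ del(a)) ∪ add(a)`. -/
def StripsAction.apply (a : StripsAction α) (s : Set α) : Set α :=
  (s \ a.del) ∪ a.add

/-- `Γ(s, π)`: the state resulting from applying the sequence `π` in `s`. -/
def seqResult (s : Set α) : List (StripsAction α) → Set α
  | [] => s
  | a :: π => seqResult (a.apply s) π

/-- A sequence of actions is applicable in `s` if each action is applicable in the
state resulting from the previous ones. -/
def SeqApplicable (s : Set α) : List (StripsAction α) → Prop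
  | [] => True
  | a :: π => a.Applicable s ∧ SeqApplicable (a.apply s) π

/-- Cost of a plan: sum of the costs of its actions. -/
def planCost (π : List (StripsAction α)) : NNReal :=
  (π.map StripsAction.cost).sum

/-- A STRIPS planning task `P = ⟨F, A, I, G⟩`. -/
structure StripsTask (α : Type*) where
  F : Set α
  A : Set (StripsAction α)
  I : Set α
  G : Set α

/-- Well-formedness of a STRIPS planning task: `F` and `A` finite, `I ⊆ F`, `G ⊆ F`,
all action components within `F`, and `add(a) ∩ del(a) = ∅`. -/
def StripsTask.WellFormed (T : StripsTask α) : Prop :=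
  T.F.Finite ∧ T.A.Finite ∧ T.I ⊆ T.F ∧ T.G ⊆ T.F ∧
    ∀ a ∈ T.A, a.prePos ⊆ T.F ∧ a.preNeg ⊆ T.F ∧ a.add ⊆ T.F ∧ a.del ⊆ T.F ∧
      a.add ∩ a.del = ∅

/-- A plan for a task: a sequence of actions of the task, applicable in `I`,
whose result satisfies `G`. -/
def StripsTask.IsPlan (T : StripsTask α) (π : List (StripsAction α)) : Prop :=
  (∀ a ∈ π, a ∈ T.A) ∧ SeqApplicable T.I π ∧ T.G ⊆ seqResult T.I π

/-- A task is solvable if it has a plan. -/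
def StripsTask.Solvable (T : StripsTask α) : Prop := ∃ π, T.IsPlan π

/-- An optimal plan: a plan of minimal cost among all plans. -/
def StripsTask.OptimalPlan (T : StripsTask α) (π : List (StripsAction α)) : Prop :=
  T.IsPlan π ∧ ∀ π₂, T.IsPlan π₂ → planCost π ≤ planCost π₂

/-- Pending goals: `Ḡ = {g ∈ G \ I | ∃ a ∈ A, g ∈ add(a)}`. -/
def pending (T : StripsTask α) : Set α :=
  {g | g ∈ T.G \ T.I ∧ ∃ a ∈ T.A, g ∈ a.add}

/-- The map `g ↦ g-commit` introduces fresh fluents: it is injective on the pending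
goals and its values on them avoid `F`. -/
def FreshCommit (T : StripsTask α) (commit : α → α) : Prop :=
  Set.InjOn commit (pending T) ∧ ∀ g ∈ pending T, commit g ∉ T.F

/-- Commit version of an action `a ∈ A^G` for a subset `i ⊆ add(a) ∩ Ḡ`. -/
def commitAction (commit : α → α) (a : StripsAction α) (i : Set α) : StripsAction α :=
  ⟨a.prePos, a.preNeg ∪ commit '' i, a.add ∪ commit '' i, a.del, a.cost⟩

/-- Force-commit version of an action `a ∈ A^¬G`. -/
def forceCommitAction (commit : α → α) (Gbar : Set α) (a : StripsAction α) : StripsAction α :=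
  ⟨a.prePos, a.preNeg ∪ commit '' (a.del ∩ Gbar), a.add, a.del, a.cost⟩

/-- Simultaneous version of an action `a ∈ A^G*` for a subset `j ⊆ add(a) ∩ Ḡ`. -/
def simAction (commit : α → α) (Gbar : Set α) (a : StripsAction α) (j : Set α) : StripsAction α :=
  ⟨a.prePos, a.preNeg ∪ commit '' j ∪ commit '' (a.del ∩ Gbar),
    a.add ∪ commit '' j, a.del, a.cost⟩

/-- `CompiledFrom T commit a' a` holds iff `a'` is one of the actions of the commit
task built from the original action `a ∈ A`, i.e. `ρ(a') = a`. -/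
def CompiledFrom (T : StripsTask α) (commit : α → α) (a' a : StripsAction α) : Prop :=
  a ∈ T.A ∧
    ((a.add ∩ pending T ≠ ∅ ∧ a.del ∩ pending T = ∅ ∧
        ∃ i ⊆ a.add ∩ pending T, a' = commitAction commit a i) ∨
     (a.add ∩ pending T = ∅ ∧ a.del ∩ pending T ≠ ∅ ∧
        a' = forceCommitAction commit (pending T) a) ∨
     (a.add ∩ pending T ≠ ∅ ∧ a.del ∩ pending T ≠ ∅ ∧
        ∃ j ⊆ a.add ∩ pending T, a' = simAction commit (pending T) a j) ∨
     (a.add ∩ pending T = ∅ ∧ a.del ∩ pending T = ∅ ∧ a' = a))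

/-- The commit planning task `P_c = ⟨F ∪ F', A_c, I, G_c⟩`. -/
def commitTask (T : StripsTask α) (commit : α → α) : StripsTask α :=
  ⟨T.F ∪ commit '' pending T,
   {a' | ∃ a, CompiledFrom T commit a' a},
   T.I,
   (T.G \ pending T) ∪ commit '' pending T⟩

/-- A fluent not present and never added stays absent. -/
lemma persist_not_added (g : α) : ∀ (π : List (StripsAction α)) (s : Set α),
    g ∉ s → (∀ b ∈ π, g ∉ b.add) → g ∉ seqResult s π
  | [], _, hg, _ => hg
  | b :: π, s, hg, hadd => by
    apply persist_not_added g π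
    · rintro (h1 | h2)
      · exact hg h1.1
      · exact hadd b List.mem_cons_self h2
    · intro c hc
      exact hadd c (List.mem_cons_of_mem _ hc)

/-- Goals of `pending T` already committed when the suffix `π` of the plan remains:
those pending goals which no action in `π` adds. -/
def ctd (T : StripsTask α) (π : List (StripsAction α)) : Set α :=
  {g | g ∈ pending T ∧ ∀ b ∈ π, g ∉ b.add}

lemma ctd_subset_pending (T : StripsTask α) (π : List (StripsAction α)) :
    ctd T π ⊆ pending T := fun _ hg => hg.1

/-- Uniform description of the compiled action we use for each original action. -/
def uniAction (commit : α → α) (Gbar : Set α) (a : StripsAction α) (i : Set α) :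
    StripsAction α :=
  ⟨a.prePos, a.preNeg ∪ commit '' i ∪ commit '' (a.del ∩ Gbar),
    a.add ∪ commit '' i, a.del, a.cost⟩

lemma uni_compiled (T : StripsTask α) (commit : α → α) {a : StripsAction α} {i : Set α}
    (ha : a ∈ T.A) (hi : i ⊆ a.add ∩ pending T) :
    CompiledFrom T commit (uniAction commit (pending T) a i) a := by
  refine ⟨ha, ?_⟩
  by_cases h1 : a.add ∩ pending T = ∅ <;> by_cases h2 : a.del ∩ pending T = ∅
  · have hi0 : i = ∅ := Set.subset_empty_iff.mp (h1 ▸ hi)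
    refine Or.inr (Or.inr (Or.inr ⟨h1, h2, ?_⟩))
    cases a
    simp [uniAction, hi0, h2]
  · have hi0 : i = ∅ := Set.subset_empty_iff.mp (h1 ▸ hi)
    refine Or.inr (Or.inl ⟨h1, h2, ?_⟩)
    cases a
    simp [uniAction, forceCommitAction, hi0]
  · exact Or.inl ⟨h1, h2, i, hi, by cases a; simp [uniAction, commitAction, h2]⟩
  · exact Or.inr (Or.inr (Or.inl ⟨h1, h2, i, hi, by cases a; simp [uniAction, simAction]⟩))

/-- Main inductive lemma: the original plan suffix `π` from state `s ⊆ F` can be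
compiled, starting from `s` augmented with the already-committed fluents, to a
suffix reaching the original result plus all commit fluents. -/
lemma commit_main (T : StripsTask α) (commit : α → α) (hwf : T.WellFormed)
    (hfresh : FreshCommit T commit) :
    ∀ (π : List (StripsAction α)) (s : Set α), (∀ a ∈ π, a ∈ T.A) → s ⊆ T.F →
      SeqApplicable s π → T.G ⊆ seqResult s π →
      ∃ π', (∀ a' ∈ π', a' ∈ (commitTask T commit).A) ∧
        SeqApplicable (s ∪ commit '' ctd T π) π' ∧
        seqResult (s ∪ commit '' ctd T π) π' = seqResult s π ∪ commit '' pending T := by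
  intro π
  induction π with
  | nil =>
    intro s _ _ _ _
    refine ⟨[], by simp, trivial, ?_⟩
    have : ctd T ([] : List (StripsAction α)) = pending T := by
      ext g; simp [ctd]
    simp [seqResult, this]
  | cons a rest ih =>
    intro s hA hsF hseq hG
    have haA : a ∈ T.A := hA a List.mem_cons_self
    obtain ⟨hpp, hpn, hadd, hdel, haddel⟩ := hwf.2.2.2.2 a haA
    have happ : a.Applicable s := hseq.1
    have hrest : SeqApplicable (a.apply s) rest := hseq.2
    have hs' : a.apply s ⊆ T.F := by
      rintro x (hx | hx)
      · exact hsF hx.1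
      · exact hadd hx
    have hG' : T.G ⊆ seqResult (a.apply s) rest := hG
    -- commit exactly the goals whose last achiever is `a`
    set i : Set α := a.add ∩ ctd T rest with hi_def
    have hi : i ⊆ a.add ∩ pending T :=
      Set.inter_subset_inter_right _ (ctd_subset_pending T rest)
    obtain ⟨π'r, hA', hseq', hres'⟩ := ih (a.apply s) (fun b hb => hA b (List.mem_cons_of_mem _ hb))
      hs' hrest hG'
    set a' := uniAction commit (pending T) a i with ha'_def
    set S := s ∪ commit '' ctd T (a :: rest) with hS_def
    -- no pending goal deleted by `a` is already committed
    have hdelC : ∀ g, g ∈ a.del → g ∈ ctd T (a :: rest) → False := by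
      intro g hgdel hgc
      have hp : g ∈ T.G \ T.I ∧ ∃ b ∈ T.A, g ∈ b.add := hgc.1
      have hga : g ∉ a.add := hgc.2 a List.mem_cons_self
      have hnadd : ∀ b ∈ rest, g ∉ b.add := fun b hb => hgc.2 b (List.mem_cons_of_mem _ hb)
      have hns : g ∉ a.apply s := by
        rintro (h | h)
        · exact h.2 hgdel
        · exact hga h
      exact persist_not_added g rest (a.apply s) hns hnadd (hG' hp.1.1)
    -- splitting the committed set
    have hsplit : ctd T rest = ctd T (a :: rest) ∪ i := by
      ext g
      constructor
      · intro hg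
        by_cases hga : g ∈ a.add
        · exact Or.inr ⟨hga, hg⟩
        · refine Or.inl ⟨hg.1, ?_⟩
          intro b hb
          rcases List.mem_cons.mp hb with rfl | hb'
          · exact hga
          · exact hg.2 b hb'
      · rintro (hg | hg)
        · exact ⟨hg.1, fun b hb => hg.2 b (List.mem_cons_of_mem _ hb)⟩
        · exact hg.2
    -- applicability of the compiled action
    have happc : a'.Applicable S := by
      constructor
      · exact fun x hx => Or.inl (happ.1 hx)
      · ext x
        simp only [ha'_def, hS_def, uniAction, Set.mem_inter_iff, Set.mem_union,
          Set.mem_empty_iff_false, iff_false, not_and]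
        rintro ((hpn' | hci) | hcd) (hs | hc)
        · exact Set.eq_empty_iff_forall_notMem.mp happ.2 x ⟨hpn', hs⟩
        · obtain ⟨g, hg, rfl⟩ := hc
          exact hfresh.2 g hg.1 (hpn hpn')
        · obtain ⟨g, hg, rfl⟩ := hci
          exact hfresh.2 g hg.2.1 (hsF hs)
        · obtain ⟨g, hg, hge⟩ := hci
          obtain ⟨g', hg', hge'⟩ := hc
          have : g = g' := hfresh.1 hg.2.1 hg'.1 (hge.trans hge'.symm)
          exact hg'.2 a List.mem_cons_self (this ▸ hg.1)
        · obtain ⟨g, hg, rfl⟩ := hcd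
          exact hfresh.2 g hg.2 (hsF hs)
        · obtain ⟨g, hg, hge⟩ := hcd
          obtain ⟨g', hg', hge'⟩ := hc
          have : g = g' := hfresh.1 hg.2 hg'.1 (hge.trans hge'.symm)
          exact hdelC g' (this ▸ hg.1) hg'
    -- effect of the compiled action
    have happly : a'.apply S = a.apply s ∪ commit '' ctd T rest := by
      have hC'del : ∀ x ∈ commit '' ctd T (a :: rest), x ∉ a.del := by
        intro x hx hd
        obtain ⟨g, hg, rfl⟩ := hx
        exact hfresh.2 g hg.1 (hdel hd)
      ext x
      simp only [ha'_def, hS_def, uniAction, StripsAction.apply, hsplit, Set.image_union,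
        Set.mem_union, Set.mem_diff]
      constructor
      · rintro (⟨hs | hc, hnd⟩ | (ha | hci))
        · exact Or.inl (Or.inl ⟨hs, hnd⟩)
        · exact Or.inr (Or.inl hc)
        · exact Or.inl (Or.inr ha)
        · exact Or.inr (Or.inr hci)
      · rintro ((⟨hs, hnd⟩ | ha) | (hc | hci))
        · exact Or.inl ⟨Or.inl hs, hnd⟩
        · exact Or.inr (Or.inl ha)
        · exact Or.inl ⟨Or.inr hc, hC'del x hc⟩
        · exact Or.inr (Or.inr hci)
    refine ⟨a' :: π'r, ?_, ?_, ?_⟩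
    · intro b hb
      rcases List.mem_cons.mp hb with rfl | hb'
      · exact ⟨a, uni_compiled T commit haA hi⟩
      · exact hA' b hb'
    · refine ⟨happc, ?_⟩
      show SeqApplicable (a'.apply S) π'r
      rw [happly]
      exact hseq'
    · show seqResult (a'.apply S) π'r = seqResult (a.apply s) rest ∪ commit '' pending T
      rw [happly]
      exact hres'

/-- Theorem 1 (completeness): if `P` is solvable, then `P_c` is solvable. -/
theorem commit_compilation_complete {α : Type*} (T : StripsTask α) (commit : α → α)
    (hwf : T.WellFormed) (hfresh : FreshCommit T commit)
    (h : T.Solvable) : (commitTask T commit).Solvable := by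
  obtain ⟨π, hπA, hπseq, hπG⟩ := h
  have hI : T.I ⊆ T.F := hwf.2.2.1
  have hctd : ctd T π = ∅ := by
    ext g
    simp only [Set.mem_empty_iff_false, iff_false]
    rintro ⟨hp, hno⟩
    have hp' : g ∈ T.G \ T.I ∧ ∃ b ∈ T.A, g ∈ b.add := hp
    exact persist_not_added g π T.I hp'.1.2 hno (hπG hp'.1.1)
  obtain ⟨π', hA', hseq', hres'⟩ := commit_main T commit hwf hfresh π T.I hπA hI hπseq hπG
  rw [hctd, Set.image_empty, Set.union_empty] at hseq' hres'
  refine ⟨π', hA', hseq', ?_⟩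
  show (T.G \ pending T) ∪ commit '' pending T ⊆ seqResult T.I π'
  rw [hres']
  rintro x (⟨hx, _⟩ | hx)
  · exact Or.inl (hπG hx)
  · exact Or.inr hx
end

section
/- Strengthened completeness of the commit compilation: for every plan π = (a₁,…,aₙ) of the STRIPS planning task P there exists a plan π' = (a'₁,…,a'ₙ) of the commit task P_c of the same length n such that ρ(a'_k) = a_k for every k = 1,…,n; in particular c(π') = c(π). -/
variable {α : Type*}

section Aux
variable {α : Type*}

lemma seqResult_persist (g : α) : ∀ (π : List (StripsAction α)) (s : Set α),
    (∀ b ∈ π, g ∉ b.add ∧ g ∉ b.del) → (g ∈ seqResult s π ↔ g ∈ s)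
  | [], _, _ => Iff.rfl
  | b :: π, s, h => by
    have hb := h b (List.mem_cons_self)
    rw [seqResult, seqResult_persist g π _ (fun c hc => h c (List.mem_cons_of_mem _ hc))]
    simp [StripsAction.apply, Set.mem_union, Set.mem_diff, hb.1, hb.2]

lemma seqResult_added (g : α) : ∀ (π : List (StripsAction α)) (s : Set α),
    g ∈ seqResult s π → g ∉ s → ∃ a ∈ π, g ∈ a.add
  | [], _, h, h' => absurd h h'
  | b :: π, s, h, h' => by
    by_cases hb : g ∈ b.add
    · exact ⟨b, List.mem_cons_self, hb⟩
    · have : g ∉ b.apply s := by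
        simp [StripsAction.apply, Set.mem_union, Set.mem_diff, hb]
        intro hg; exact absurd hg h'
      obtain ⟨a, ha, hga⟩ := seqResult_added g π (b.apply s) h this
      exact ⟨a, List.mem_cons_of_mem _ ha, hga⟩

lemma compiledFrom_sim (T : StripsTask α) (commit : α → α) (a : StripsAction α)
    (haA : a ∈ T.A) (i : Set α) (hi : i ⊆ a.add ∩ pending T) :
    CompiledFrom T commit (simAction commit (pending T) a i) a := by
  refine ⟨haA, ?_⟩
  by_cases h1 : a.add ∩ pending T = ∅ <;> by_cases h2 : a.del ∩ pending T = ∅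
  · have hie : i = ∅ := Set.subset_empty_iff.mp (h1 ▸ hi)
    right; right; right
    refine ⟨h1, h2, ?_⟩
    simp [simAction, hie, h2, Set.image_empty, Set.union_empty]
  · have hie : i = ∅ := Set.subset_empty_iff.mp (h1 ▸ hi)
    right; left
    refine ⟨h1, h2, ?_⟩
    simp [simAction, forceCommitAction, hie, Set.image_empty, Set.union_empty]
  · left
    refine ⟨h1, h2, i, hi, ?_⟩
    simp [simAction, commitAction, h2, Set.image_empty, Set.union_empty]
  · right; right; left
    exact ⟨h1, h2, i, hi, rfl⟩

lemma compiledFrom_cost {T : StripsTask α} {commit : α → α} {a' a : StripsAction α}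
    (h : CompiledFrom T commit a' a) : a'.cost = a.cost := by
  rcases h with ⟨-, ⟨-, -, i, -, rfl⟩ | ⟨-, -, rfl⟩ | ⟨-, -, j, -, rfl⟩ | ⟨-, -, rfl⟩⟩ <;> rfl

lemma key_lift (T : StripsTask α) (commit : α → α)
    (hwf : T.WellFormed) (hfresh : FreshCommit T commit) :
    ∀ (π : List (StripsAction α)), ∀ (s C : Set α), s ⊆ T.F → C ⊆ pending T →
      (∀ a ∈ π, a ∈ T.A) → SeqApplicable s π →
      (∀ g ∈ C, ∀ b ∈ π, g ∉ b.add ∧ g ∉ b.del) →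
      ∃ π', List.Forall₂ (CompiledFrom T commit) π' π ∧
        SeqApplicable (s ∪ commit '' C) π' ∧
        seqResult (s ∪ commit '' C) π' =
          seqResult s π ∪ commit ''
            (C ∪ {g | g ∈ pending T ∧ (∃ b ∈ π, g ∈ b.add ∨ g ∈ b.del) ∧ g ∈ seqResult s π}) := by
  intro π
  induction π with
  | nil =>
    intro s C _ _ _ _ _
    refine ⟨[], List.Forall₂.nil, trivial, ?_⟩
    have : {g | g ∈ pending T ∧ (∃ b ∈ ([] : List (StripsAction α)), g ∈ b.add ∨ g ∈ b.del)
        ∧ g ∈ seqResult s []} = (∅ : Set α) := by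
      ext g; simp
    simp [seqResult, this]
  | cons a rest ih =>
    intro s C hsF hCG hmem happ hun
    obtain ⟨ha, happ'⟩ := happ
    set Gb := pending T with hGbdef
    set i : Set α := {g | g ∈ a.add ∧ g ∈ Gb ∧ ∀ b ∈ rest, g ∉ b.add ∧ g ∉ b.del} with hidef
    have hiGb : i ⊆ a.add ∩ Gb := fun g hg => ⟨hg.1, hg.2.1⟩
    have haA : a ∈ T.A := hmem a (List.mem_cons_self)
    obtain ⟨-, -, -, -, hact⟩ := hwf
    obtain ⟨hpreF, hnegF, haddF, hdelF, hdisj⟩ := hact a haA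
    have hfresh' : ∀ g ∈ Gb, commit g ∉ T.F := hfresh.2
    have hinj : Set.InjOn commit Gb := hfresh.1
    have hsF' : a.apply s ⊆ T.F := by
      rintro g (⟨hg, -⟩ | hg)
      · exact hsF hg
      · exact haddF hg
    obtain ⟨π₁, hf₁, happ₁, hres₁⟩ := ih (a.apply s) (C ∪ i) hsF'
      (by rintro g (hg | hg); exacts [hCG hg, hg.2.1])
      (fun b hb => hmem b (List.mem_cons_of_mem _ hb)) happ'
      (by
        rintro g (hg | hg) b hb
        · exact hun g hg b (List.mem_cons_of_mem _ hb)
        · exact hg.2.2 b hb)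
    -- key state equation
    have hCdel : ∀ g ∈ commit '' C, g ∉ a.del := by
      rintro _ ⟨x, hx, rfl⟩ hgd
      exact hfresh' x (hCG hx) (hdelF hgd)
    have hst : (simAction commit Gb a i).apply (s ∪ commit '' C)
        = a.apply s ∪ commit '' (C ∪ i) := by
      ext g
      simp only [StripsAction.apply, simAction, Set.mem_union, Set.mem_diff, Set.image_union]
      constructor
      · rintro (⟨hg | hg, hnd⟩ | hg | hg)
        · exact Or.inl (Or.inl ⟨hg, hnd⟩)
        · exact Or.inr (Or.inl hg)
        · exact Or.inl (Or.inr hg)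
        · exact Or.inr (Or.inr hg)
      · rintro ((⟨hg, hnd⟩ | hg) | hg | hg)
        · exact Or.inl ⟨Or.inl hg, hnd⟩
        · exact Or.inr (Or.inl hg)
        · exact Or.inl ⟨Or.inr hg, hCdel g hg⟩
        · exact Or.inr (Or.inr hg)
    refine ⟨simAction commit Gb a i :: π₁,
      List.Forall₂.cons (compiledFrom_sim T commit a haA i hiGb) hf₁, ⟨?_, ?_⟩, ?_⟩
    · -- applicability of head
      constructor
      · exact fun g hg => Or.inl (ha.1 hg)
      · rw [Set.eq_empty_iff_forall_notMem]
        rintro g ⟨hneg, hg⟩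
        have hGbmem : ∀ x ∈ Gb, commit x ∉ s ∧ commit x ∉ a.preNeg := by
          intro x hx
          exact ⟨fun h => hfresh' x hx (hsF h), fun h => hfresh' x hx (hnegF h)⟩
        rcases hneg with (hneg | ⟨x, hx, rfl⟩) | ⟨x, hx, rfl⟩
        · rcases hg with hg | ⟨y, hy, hey⟩
          · exact absurd (Set.mem_inter hneg hg) (by rw [ha.2]; exact not_false)
          · exact (hGbmem y (hCG hy)).2 (hey ▸ hneg)
        · -- commit x with x ∈ i
          rcases hg with hg | ⟨y, hy, hey⟩
          · exact (hGbmem x hx.2.1).1 hg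
          · have hxy : y = x := hinj (hCG hy) hx.2.1 hey
            subst hxy
            exact (hun y hy a (List.mem_cons_self)).1 hx.1
        · rcases hg with hg | ⟨y, hy, hey⟩
          · exact (hGbmem x hx.2).1 hg
          · have hxy : y = x := hinj (hCG hy) hx.2 hey
            subst hxy
            exact (hun y hy a (List.mem_cons_self)).2 hx.1
    · rw [hst]; exact happ₁
    · show seqResult ((simAction commit Gb a i).apply (s ∪ commit '' C)) π₁ = _
      have hset : (C ∪ i) ∪
          {g | g ∈ Gb ∧ (∃ b ∈ rest, g ∈ b.add ∨ g ∈ b.del) ∧ g ∈ seqResult (a.apply s) rest}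
          = C ∪ {g | g ∈ Gb ∧ (∃ b ∈ a :: rest, g ∈ b.add ∨ g ∈ b.del)
              ∧ g ∈ seqResult s (a :: rest)} := by
        ext g
        simp only [Set.mem_union, Set.mem_setOf_eq]
        constructor
        · rintro ((hg | hg) | ⟨hGb, ⟨b, hb, hor⟩, hR⟩)
          · exact Or.inl hg
          · refine Or.inr ⟨hg.2.1, ⟨a, List.mem_cons_self, Or.inl hg.1⟩, ?_⟩
            show g ∈ seqResult (a.apply s) rest
            rw [seqResult_persist g rest _ hg.2.2]
            exact Or.inr hg.1
          · exact Or.inr ⟨hGb, ⟨b, List.mem_cons_of_mem _ hb, hor⟩, hR⟩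
        · rintro (hg | ⟨hGb, ⟨b, hb, hor⟩, hR⟩)
          · exact Or.inl (Or.inl hg)
          · rcases List.mem_cons.mp hb with rfl | hb
            · by_cases htouch : ∃ b ∈ rest, g ∈ b.add ∨ g ∈ b.del
              · exact Or.inr ⟨hGb, htouch, hR⟩
              · push_neg at htouch
                have hu : ∀ b ∈ rest, g ∉ b.add ∧ g ∉ b.del := htouch
                have hRs : g ∈ b.apply s := by
                  have := seqResult_persist g rest (b.apply s) hu
                  exact this.mp hR
                rcases hor with hadd | hdel
                · exact Or.inl (Or.inr ⟨hadd, hGb, hu⟩)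
                · exfalso
                  rcases hRs with ⟨-, hnd⟩ | hga
                  · exact hnd hdel
                  · exact absurd (Set.mem_inter hga hdel) (by rw [hdisj]; exact not_false)
            · exact Or.inr ⟨hGb, ⟨b, hb, hor⟩, hR⟩
      rw [hst, hres₁, hset]
      rfl

lemma forall₂_exists_right {β γ : Type*} {R : β → γ → Prop} :
    ∀ {l₁ : List β} {l₂ : List γ}, List.Forall₂ R l₁ l₂ → ∀ x ∈ l₁, ∃ y, R x y := by
  intro l₁ l₂ h
  induction h with
  | nil => intro x hx; exact absurd hx List.not_mem_nil
  | cons hr _ ih =>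
    intro x hx
    rcases List.mem_cons.mp hx with rfl | hx
    · exact ⟨_, hr⟩
    · exact ih x hx

lemma forall₂_cost {T : StripsTask α} {commit : α → α} :
    ∀ {l₁ l₂ : List (StripsAction α)}, List.Forall₂ (CompiledFrom T commit) l₁ l₂ →
      planCost l₁ = planCost l₂ := by
  intro l₁ l₂ h
  induction h with
  | nil => rfl
  | cons hr _ ih =>
    simp only [planCost, List.map_cons, List.sum_cons] at *
    rw [compiledFrom_cost hr, ih]

end Aux

/-- Strengthened completeness: every plan `π` of `P` lifts to a plan `π'` of `P_c`
of the same length with `ρ(a'_k) = a_k` for every `k`, hence `c(π') = c(π)`. -/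
theorem commit_compilation_complete_strong {α : Type*} (T : StripsTask α) (commit : α → α)
    (hwf : T.WellFormed) (hfresh : FreshCommit T commit) :
    ∀ π : List (StripsAction α), T.IsPlan π →
      ∃ π' : List (StripsAction α), (commitTask T commit).IsPlan π' ∧
        List.Forall₂ (CompiledFrom T commit) π' π ∧ planCost π' = planCost π := by
  intro π hπ
  obtain ⟨hmem, happ, hgoal⟩ := hπ
  obtain ⟨π', hf, happ', hres⟩ := key_lift T commit hwf hfresh π T.I ∅ hwf.2.2.1
    (Set.empty_subset _) hmem happ (by intro g hg; exact absurd hg (Set.notMem_empty g))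
  have hIeq : T.I ∪ commit '' (∅ : Set α) = T.I := by simp
  rw [hIeq] at happ' hres
  refine ⟨π', ⟨?_, happ', ?_⟩, hf, forall₂_cost hf⟩
  · intro a' ha'
    obtain ⟨a, haa⟩ := forall₂_exists_right hf a' ha'
    exact ⟨a, haa⟩
  · show (T.G \ pending T) ∪ commit '' pending T ⊆ seqResult T.I π'
    rw [hres]
    rintro g (⟨hg, -⟩ | ⟨x, hx, rfl⟩)
    · exact Or.inl (hgoal hg)
    · have hxG : x ∈ T.G := hx.1.1
      have hxI : x ∉ T.I := hx.1.2
      have hxR : x ∈ seqResult T.I π := hgoal hxG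
      obtain ⟨b, hb, hxb⟩ := seqResult_added x π T.I hxR hxI
      exact Or.inr ⟨x, Or.inr ⟨hx, ⟨b, hb, Or.inl hxb⟩, hxR⟩, rfl⟩
end

section
/- Theorem 2 (soundness of the commit compilation): if π' = (a'₁,…,a'ₙ) is a plan of the commit task P_c, then the sequence ρ(π') = (ρ(a'₁),…,ρ(a'ₙ)), obtained by replacing each action of π' by its original counterpart, is a plan of the original STRIPS planning task P, and c(ρ(π')) = c(π'). -/
variable {α : Type*}

/-- Uniform specification of compiled actions. -/
lemma compiled_spec {T : StripsTask α} {commit : α → α} {a' a : StripsAction α}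
    (h : CompiledFrom T commit a' a) :
    a ∈ T.A ∧ a'.prePos = a.prePos ∧ a.preNeg ⊆ a'.preNeg ∧
      commit '' (a.del ∩ pending T) ⊆ a'.preNeg ∧ a'.del = a.del ∧
      a'.cost = a.cost ∧ ∃ i ⊆ a.add ∩ pending T, a'.add = a.add ∪ commit '' i := by
  obtain ⟨hA, hcase⟩ := h
  refine ⟨hA, ?_⟩
  rcases hcase with ⟨_, hdel, i, hi, rfl⟩ | ⟨_, _, rfl⟩ | ⟨_, _, j, hj, rfl⟩ | ⟨_, hdel, rfl⟩
  · refine ⟨rfl, Set.subset_union_left, ?_, rfl, rfl, i, hi, rfl⟩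
    rw [hdel, Set.image_empty]; exact Set.empty_subset _
  · exact ⟨rfl, Set.subset_union_left, Set.subset_union_right, rfl, rfl,
      ∅, Set.empty_subset _, by simp [forceCommitAction]⟩
  · exact ⟨rfl, (Set.subset_union_left).trans Set.subset_union_left,
      Set.subset_union_right, rfl, rfl, j, hj, rfl⟩
  · refine ⟨rfl, subset_rfl, ?_, rfl, rfl, ∅, Set.empty_subset _, by simp⟩
    rw [hdel, Set.image_empty]; exact Set.empty_subset _

lemma sound_aux {T : StripsTask α} {commit : α → α}
    (hwf : T.WellFormed) (hfresh : FreshCommit T commit) :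
    ∀ {π' π : List (StripsAction α)}, List.Forall₂ (CompiledFrom T commit) π' π →
      ∀ s C : Set α, s ⊆ T.F → C ⊆ commit '' pending T →
        (∀ g ∈ pending T, commit g ∈ C → g ∈ s) →
        SeqApplicable (s ∪ C) π' →
        SeqApplicable s π ∧ ∃ C', C' ⊆ commit '' pending T ∧
          seqResult (s ∪ C) π' = seqResult s π ∪ C' ∧
          (∀ g ∈ pending T, commit g ∈ C' → g ∈ seqResult s π) ∧
          seqResult s π ⊆ T.F := by
  intro π' π h
  induction h with
  | nil =>
    intro s C hs hC hinv _
    exact ⟨trivial, C, hC, rfl, hinv, hs⟩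
  | cons ha htail ih =>
    rename_i a' a π' π
    intro s C hs hC hinv happ
    obtain ⟨happ', hseq'⟩ := happ
    obtain ⟨hA, hpre, hneg, hnegdel, hdel, hcost, i, hi, hadd⟩ := compiled_spec ha
    obtain ⟨hinj, hfF⟩ := hfresh
    obtain ⟨hFfin, hAfin, hIF, hGF, hact⟩ := hwf
    obtain ⟨hpreF, hnegF, haddF, hdelF, hdisj⟩ := hact a hA
    have hCF : ∀ x ∈ C, x ∉ T.F := by
      intro x hx hxF
      obtain ⟨g, hg, rfl⟩ := hC hx
      exact hfF g hg hxF
    -- applicability of a in s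
    have happl : a.Applicable s := by
      constructor
      · intro x hx
        have := happ'.1 (hpre ▸ hx)
        rcases this with h | h
        · exact h
        · exact absurd (hpreF hx) (hCF x h)
      · apply Set.eq_empty_of_forall_notMem
        intro x ⟨hx1, hx2⟩
        have : x ∈ a'.preNeg ∩ (s ∪ C) := ⟨hneg hx1, Or.inl hx2⟩
        rw [happ'.2] at this; exact this
    -- state equation
    have hstate : a'.apply (s ∪ C) = a.apply s ∪ (C ∪ commit '' i) := by
      have hCd : C \ a.del = C := by
        ext x
        simp only [Set.mem_diff]
        exact ⟨fun h => h.1, fun h => ⟨h, fun hd => hCF x h (hdelF hd)⟩⟩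
      simp only [StripsAction.apply, hdel, hadd, Set.union_diff_distrib, hCd]
      ext x; simp; tauto
    have hinegpend : ∀ g ∈ i, g ∈ pending T := fun g hg => (hi hg).2
    have hs1 : a.apply s ⊆ T.F := by
      intro x hx
      rcases hx with ⟨h, _⟩ | h
      · exact hs h
      · exact haddF h
    have hC1 : C ∪ commit '' i ⊆ commit '' pending T := by
      apply Set.union_subset hC
      exact Set.image_mono hinegpend
    have hinv1 : ∀ g ∈ pending T, commit g ∈ C ∪ commit '' i → g ∈ a.apply s := by
      intro g hg hgc
      rcases hgc with hgc | hgc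
      · -- old commit; g not deleted
        have hgs := hinv g hg hgc
        have hgnd : g ∉ a.del := by
          intro hgd
          have : commit g ∈ a'.preNeg := hnegdel ⟨g, ⟨hgd, hg⟩, rfl⟩
          have : commit g ∈ a'.preNeg ∩ (s ∪ C) := ⟨this, Or.inr hgc⟩
          rw [happ'.2] at this; exact this
        exact Or.inl ⟨hgs, hgnd⟩
      · obtain ⟨h, hh, hcomm⟩ := hgc
        have : h = g := hinj (hinegpend h hh) hg hcomm
        subst this
        exact Or.inr (hi hh).1
    rw [hstate] at hseq'
    obtain ⟨hseqtail, C', hC', heq, hinv', hsub⟩ := ih (a.apply s) (C ∪ commit '' i) hs1 hC1 hinv1 hseq'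
    exact ⟨⟨happl, hseqtail⟩, C', hC', by simpa [seqResult, hstate] using heq, hinv', hsub⟩

/-- Theorem 2 (soundness): if `π'` is a plan of `P_c`, then the sequence `ρ(π')`,
obtained by replacing each action by its original counterpart, is a plan of `P`
of the same cost. -/
theorem commit_compilation_sound {α : Type*} (T : StripsTask α) (commit : α → α)
    (hwf : T.WellFormed) (hfresh : FreshCommit T commit)
    (π' : List (StripsAction α)) (hplan : (commitTask T commit).IsPlan π') :
    ∀ π : List (StripsAction α), List.Forall₂ (CompiledFrom T commit) π' π →
      T.IsPlan π ∧ planCost π = planCost π' := by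
  intro π h
  obtain ⟨hmem', hseq', hgoal'⟩ := hplan
  obtain ⟨hseq, C', hC', heq, hinv', hsub⟩ := by
    have := sound_aux hwf hfresh h T.I ∅ hwf.2.2.1 (Set.empty_subset _)
      (by simp) (by rw [Set.union_empty]; exact hseq')
    exact this
  rw [Set.union_empty] at heq
  have hmem : ∀ a ∈ π, a ∈ T.A := by
    clear hseq' hgoal' heq hseq hinv' hsub
    induction h with
    | nil => simp
    | cons ha _ ih =>
      intro b hb
      rcases List.mem_cons.mp hb with rfl | hb
      · exact (compiled_spec ha).1
      · exact ih (fun x hx => hmem' x (List.mem_cons_of_mem _ hx)) b hb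
  have hcost : planCost π = planCost π' := by
    clear hseq' hgoal' heq hmem hseq hinv' hsub
    induction h with
    | nil => rfl
    | cons ha _ ih =>
      simp only [planCost, List.map_cons, List.sum_cons] at *
      rw [(compiled_spec ha).2.2.2.2.2.1,
        ih (fun x hx => hmem' x (List.mem_cons_of_mem _ hx))]
  refine ⟨⟨hmem, hseq, ?_⟩, hcost⟩
  replace hgoal' : (T.G \ pending T) ∪ commit '' pending T ⊆ seqResult T.I π' := hgoal'
  rw [heq] at hgoal'
  intro g hg
  by_cases hp : g ∈ pending T
  · have : commit g ∈ seqResult T.I π ∪ C' := hgoal' (Or.inr ⟨g, hp, rfl⟩)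
    rcases this with hc | hc
    · exact absurd (hsub hc) (hfresh.2 g hp)
    · exact hinv' g hp hc
  · have : g ∈ seqResult T.I π ∪ C' := hgoal' (Or.inl ⟨hg, hp⟩)
    rcases this with hc | hc
    · exact hc
    · obtain ⟨h', hh', hcomm⟩ := hC' hc
      exact absurd (hcomm ▸ hwf.2.2.2.1 hg : commit h' ∈ T.F) (hfresh.2 h' hh')
end

section
/- Equality of optimal plan costs: if the STRIPS planning task P is solvable, then the minimum cost over all plans of P equals the minimum cost over all plans of the commit task P_c. -/
variable {α : Type*}

/-! ### Auxiliary lemmas for the commit compilation -/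

lemma StripsAction.ext' {a b : StripsAction α} (h1 : a.prePos = b.prePos)
    (h2 : a.preNeg = b.preNeg) (h3 : a.add = b.add) (h4 : a.del = b.del)
    (h5 : a.cost = b.cost) : a = b := by
  cases a; cases b; simp_all

/-- If `g` is absent from `s` and no action of `π` adds it, it stays absent. -/
lemma absent_persist {g : α} :
    ∀ (π : List (StripsAction α)) (s : Set α), g ∉ s → (∀ b ∈ π, g ∉ b.add) →
      g ∉ seqResult s π
  | [], _, hs, _ => hs
  | a :: π, s, hs, hb => by
      have hna : g ∉ a.add := hb a (by simp)
      have h1 : g ∉ a.apply s := by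
        intro hmem
        rcases hmem with h | h
        · exact hs h.1
        · exact hna h
      exact absent_persist π (a.apply s) h1 (fun b hbm => hb b (by simp [hbm]))

/-- States stay inside a set containing the initial state and all add effects. -/
lemma seqResult_subset {F : Set α} :
    ∀ (π : List (StripsAction α)) (s : Set α), s ⊆ F → (∀ b ∈ π, b.add ⊆ F) →
      seqResult s π ⊆ F
  | [], _, hs, _ => hs
  | a :: π, s, hs, hb =>
      seqResult_subset π (a.apply s)
        (Set.union_subset (Set.diff_subset.trans hs) (hb a (by simp)))
        (fun b hbm => hb b (by simp [hbm]))

/-- Every compiled action is a `simAction` for some subset of `add(a) ∩ Ḡ`. -/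
lemma compiled_eq_sim {T : StripsTask α} {commit : α → α} {a' a : StripsAction α}
    (h : CompiledFrom T commit a' a) :
    ∃ i ⊆ a.add ∩ pending T, a' = simAction commit (pending T) a i := by
  obtain ⟨-, h⟩ := h
  rcases h with ⟨hadd, hdel, i, hi, rfl⟩ | ⟨hadd, hdel, rfl⟩ | ⟨hadd, hdel, i, hi, rfl⟩ |
    ⟨hadd, hdel, rfl⟩
  · exact ⟨i, hi, StripsAction.ext' rfl (by simp [commitAction, simAction, hdel]) rfl rfl rfl⟩
  · exact ⟨∅, by simp, StripsAction.ext' rfl (by simp [forceCommitAction, simAction])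
      (by simp [forceCommitAction, simAction]) rfl rfl⟩
  · exact ⟨i, hi, rfl⟩
  · exact ⟨∅, by simp, StripsAction.ext' rfl (by simp [simAction, hdel])
      (by simp [simAction]) rfl rfl⟩

/-- Forward simulation: a plan of `P` can be compiled into an equal-cost plan of `P_c`,
committing each pending goal at its last adder. -/
lemma commit_forward {T : StripsTask α} {commit : α → α} (hwf : T.WellFormed)
    (hfresh : FreshCommit T commit) :
    ∀ (π : List (StripsAction α)) (s D : Set α),
      (∀ a ∈ π, a ∈ T.A) → SeqApplicable s π → s ⊆ T.F → D ⊆ pending T →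
      D ⊆ s → (∀ g ∈ D, ∀ b ∈ π, g ∉ b.add) → pending T ⊆ seqResult s π →
      ∃ π' : List (StripsAction α),
        (∀ a' ∈ π', a' ∈ (commitTask T commit).A) ∧
        SeqApplicable (s ∪ commit '' D) π' ∧
        planCost π' = planCost π ∧
        seqResult (s ∪ commit '' D) π' =
          seqResult s π ∪ commit '' (D ∪ {g | g ∈ pending T ∧ ∃ b ∈ π, g ∈ b.add}) := by
  intro π
  induction π with
  | nil =>
      intro s D _ _ _ _ _ _ _
      refine ⟨[], by simp, trivial, rfl, ?_⟩
      have : {g | g ∈ pending T ∧ ∃ b ∈ ([] : List (StripsAction α)), g ∈ b.add} = ∅ := by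
        ext g; simp
      simp [seqResult, this]
  | cons a rest ih =>
      intro s D hA happ hsF hDP hDs hDna hPres
      obtain ⟨hinj, hout⟩ := hfresh
      have ha : a ∈ T.A := hA a (by simp)
      obtain ⟨-, -, -, -, hwfa⟩ := hwf
      obtain ⟨hpreF, hnegF, haddF, hdelF, hadF⟩ := hwfa a ha
      obtain ⟨⟨hprePos, hpreNeg⟩, happrest⟩ := happ
      set P := pending T with hPdef
      set i : Set α := {g | (g ∈ a.add ∧ g ∈ P) ∧ ¬ ∃ b ∈ rest, g ∈ b.add} with hidef
      have hiP : i ⊆ a.add ∩ P := fun g hg => hg.1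
      set a' := simAction commit P a i with ha'def
      have hCF : ∀ g ∈ P, commit g ∉ T.F := hout
      -- no committed goal is deleted by `a`
      have hDdel : ∀ g ∈ D, g ∉ a.del := by
        intro g hg hgdel
        have hgadd : ∀ b ∈ (a :: rest), g ∉ b.add := hDna g hg
        have hna : g ∉ a.add := hgadd a (by simp)
        have h1 : g ∉ a.apply s := by
          intro hmem
          rcases hmem with h | h
          · exact h.2 hgdel
          · exact hna h
        have habs := absent_persist rest (a.apply s) h1
          (fun b hb => hgadd b (by simp [hb]))
        exact habs (hPres (hDP hg))
      -- applicability of the compiled action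
      have hppos : a'.prePos ⊆ s ∪ commit '' D := hprePos.trans Set.subset_union_left
      have hpneg : a'.preNeg ∩ (s ∪ commit '' D) = ∅ := by
        ext x
        simp only [Set.mem_inter_iff, Set.mem_empty_iff_false, iff_false, not_and]
        intro hx1 hx2
        have hx1' : x ∈ a.preNeg ∨ x ∈ commit '' i ∨ x ∈ commit '' (a.del ∩ P) := by
          rcases hx1 with (h | h) | h
          · exact Or.inl h
          · exact Or.inr (Or.inl h)
          · exact Or.inr (Or.inr h)
        rcases hx1' with h | ⟨g, hg, rfl⟩ | ⟨g, hg, rfl⟩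
        · rcases hx2 with h2 | ⟨g, hg, rfl⟩
          · exact absurd (Set.mem_inter h h2) (by rw [hpreNeg]; exact Set.notMem_empty x)
          · exact hCF g (hDP hg) (hnegF h)
        · rcases hx2 with h2 | ⟨g', hg', he⟩
          · exact hCF g (hiP hg).2 (hsF h2)
          · have : g' = g := hinj (hDP hg') (hiP hg).2 he
            exact hDna g (this ▸ hg') a (by simp) (hiP hg).1
        · rcases hx2 with h2 | ⟨g', hg', he⟩
          · exact hCF g hg.2 (hsF h2)
          · have : g' = g := hinj (hDP hg') hg.2 he
            exact hDdel g (this ▸ hg') hg.1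
      -- state update equality
      have happly : a'.apply (s ∪ commit '' D) = a.apply s ∪ commit '' (D ∪ i) := by
        have h1 : ∀ x, x ∈ commit '' D → x ∉ a.del := by
          rintro x ⟨g, hg, rfl⟩ hxd
          exact hCF g (hDP hg) (hdelF hxd)
        have h2 : a'.apply (s ∪ commit '' D) =
            ((s ∪ commit '' D) \ a.del) ∪ (a.add ∪ commit '' i) := by
          show ((s ∪ commit '' D) \ a.del) ∪ (a.add ∪ commit '' i) = _
          rfl
        rw [h2, Set.image_union]
        ext x
        simp only [StripsAction.apply, Set.image_union, Set.mem_union, Set.mem_diff]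
        have := h1 x
        tauto
      -- apply the induction hypothesis
      have hDiP : D ∪ i ⊆ P :=
        Set.union_subset hDP (hiP.trans Set.inter_subset_right)
      have hDis : D ∪ i ⊆ a.apply s := by
        rintro g (hg | hg)
        · exact Or.inl ⟨hDs hg, hDdel g hg⟩
        · exact Or.inr (hiP hg).1
      have hDina : ∀ g ∈ D ∪ i, ∀ b ∈ rest, g ∉ b.add := by
        rintro g (hg | hg) b hb hgb
        · exact hDna g hg b (by simp [hb]) hgb
        · exact hg.2 ⟨b, hb, hgb⟩
      have hs2F : a.apply s ⊆ T.F :=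
        Set.union_subset (Set.diff_subset.trans hsF) haddF
      obtain ⟨π'', h1, h2, h3, h4⟩ := ih (a.apply s) (D ∪ i)
        (fun b hb => hA b (by simp [hb])) happrest hs2F hDiP hDis hDina hPres
      -- membership of the compiled action in A_c
      have ha'mem : a' ∈ (commitTask T commit).A := by
        refine ⟨a, ha, ?_⟩
        rw [ha'def]
        by_cases e1 : a.add ∩ P = ∅ <;> by_cases e2 : a.del ∩ P = ∅
        · have hie : i = ∅ := Set.subset_empty_iff.mp (e1 ▸ hiP)
          refine Or.inr (Or.inr (Or.inr ⟨e1, e2, ?_⟩))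
          exact StripsAction.ext' rfl (by simp [simAction, hie, e2]) (by simp [simAction, hie])
            rfl rfl
        · have hie : i = ∅ := Set.subset_empty_iff.mp (e1 ▸ hiP)
          exact Or.inr (Or.inl ⟨e1, e2,
            StripsAction.ext' rfl (by simp [simAction, forceCommitAction, hie, hPdef])
              (by simp [simAction, forceCommitAction, hie]) rfl rfl⟩)
        · exact Or.inl ⟨e1, e2, i, hiP,
            StripsAction.ext' rfl (by simp [simAction, commitAction, e2]) rfl rfl rfl⟩
        · exact Or.inr (Or.inr (Or.inl ⟨e1, e2, i, hiP, rfl⟩))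
      refine ⟨a' :: π'', ?_, ⟨⟨hppos, hpneg⟩, by rw [happly]; exact h2⟩, ?_, ?_⟩
      · rintro b hb
        rcases List.mem_cons.mp hb with rfl | hb
        · exact ha'mem
        · exact h1 b hb
      · have hc : a'.cost = a.cost := rfl
        simp only [planCost, List.map_cons, List.sum_cons] at h3 ⊢
        rw [hc, h3]
      · have hseq : seqResult (s ∪ commit '' D) (a' :: π'') =
            seqResult (a'.apply (s ∪ commit '' D)) π'' := rfl
        rw [hseq, happly, h4]
        have hDeq : (D ∪ i) ∪ {g | g ∈ P ∧ ∃ b ∈ rest, g ∈ b.add} =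
            D ∪ {g | g ∈ P ∧ ∃ b ∈ a :: rest, g ∈ b.add} := by
          ext g
          simp only [Set.mem_union, Set.mem_setOf_eq, hidef, List.mem_cons]
          constructor
          · rintro ((h | ⟨⟨h1', h2'⟩, _⟩) | ⟨h1', b, hb, h3'⟩)
            · exact Or.inl h
            · exact Or.inr ⟨h2', a, Or.inl rfl, h1'⟩
            · exact Or.inr ⟨h1', b, Or.inr hb, h3'⟩
          · rintro (h | ⟨h1', b, (rfl | hb), h3'⟩)
            · exact Or.inl (Or.inl h)
            · by_cases hq : ∃ b ∈ rest, g ∈ b.add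
              · obtain ⟨c, hc, hgc⟩ := hq
                exact Or.inr ⟨h1', c, hc, hgc⟩
              · exact Or.inl (Or.inr ⟨⟨h3', h1'⟩, hq⟩)
            · exact Or.inr ⟨h1', b, hb, h3'⟩
        have hseq2 : seqResult s (a :: rest) = seqResult (a.apply s) rest := rfl
        rw [hseq2, hDeq]

/-- Backward simulation: a plan of `P_c` can be decompiled into an equal-cost plan of `P`. -/
lemma commit_backward {T : StripsTask α} {commit : α → α} (hwf : T.WellFormed)
    (hfresh : FreshCommit T commit) :
    ∀ (π' : List (StripsAction α)) (s C₀ : Set α),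
      (∀ a' ∈ π', a' ∈ (commitTask T commit).A) → SeqApplicable (s ∪ C₀) π' →
      s ⊆ T.F → C₀ ⊆ commit '' pending T →
      (∀ g ∈ pending T, commit g ∈ C₀ → g ∈ s) →
      ∃ (π : List (StripsAction α)) (C₁ : Set α),
        (∀ a ∈ π, a ∈ T.A) ∧ SeqApplicable s π ∧ planCost π = planCost π' ∧
        C₁ ⊆ commit '' pending T ∧
        seqResult (s ∪ C₀) π' = seqResult s π ∪ C₁ ∧
        (∀ g ∈ pending T, commit g ∈ C₁ → g ∈ seqResult s π) ∧
        seqResult s π ⊆ T.F := by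
  intro π'
  induction π' with
  | nil =>
      intro s C₀ _ _ hsF hC₀ hinv
      exact ⟨[], C₀, by simp, trivial, rfl, hC₀, rfl, hinv, hsF⟩
  | cons a' rest' ih =>
      intro s C₀ hA' happ' hsF hC₀ hinv
      obtain ⟨hinj, hout⟩ := hfresh
      obtain ⟨a, hcomp⟩ := hA' a' (by simp)
      have ha : a ∈ T.A := hcomp.1
      obtain ⟨i, hiP, rfl⟩ := compiled_eq_sim hcomp
      obtain ⟨-, -, -, -, hwfa⟩ := hwf
      obtain ⟨hpreF, hnegF, haddF, hdelF, hadF⟩ := hwfa a ha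
      obtain ⟨⟨hprePos, hpreNeg⟩, happrest⟩ := happ'
      set P := pending T with hPdef
      have hCF : ∀ g ∈ P, commit g ∉ T.F := hout
      -- applicability of the original action in s
      have hApos : a.prePos ⊆ s := by
        intro x hx
        rcases hprePos hx with h | h
        · exact h
        · obtain ⟨g, hg, rfl⟩ := hC₀ h
          exact absurd (hpreF hx) (hCF g hg)
      have hAneg : a.preNeg ∩ s = ∅ := by
        ext x
        simp only [Set.mem_inter_iff, Set.mem_empty_iff_false, iff_false, not_and]
        intro h1 h2
        have : x ∈ (simAction commit P a i).preNeg ∩ (s ∪ C₀) :=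
          ⟨Or.inl (Or.inl h1), Or.inl h2⟩
        rw [hpreNeg] at this
        exact this
      -- no goal committed in C₀ is deleted by a
      have hC₀del : ∀ g ∈ P, commit g ∈ C₀ → g ∉ a.del := by
        intro g hg hgc hgd
        have : commit g ∈ (simAction commit P a i).preNeg ∩ (s ∪ C₀) :=
          ⟨Or.inr ⟨g, ⟨hgd, hg⟩, rfl⟩, Or.inr hgc⟩
        rw [hpreNeg] at this
        exact this
      -- state update equality
      have happly : (simAction commit P a i).apply (s ∪ C₀) =
          a.apply s ∪ (C₀ ∪ commit '' i) := by
        have h1 : ∀ x, x ∈ C₀ → x ∉ a.del := by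
          intro x hx hxd
          obtain ⟨g, hg, rfl⟩ := hC₀ hx
          exact hCF g hg (hdelF hxd)
        have h2 : (simAction commit P a i).apply (s ∪ C₀) =
            ((s ∪ C₀) \ a.del) ∪ (a.add ∪ commit '' i) := rfl
        rw [h2]
        ext x
        simp only [StripsAction.apply, Set.image_union, Set.mem_union, Set.mem_diff]
        have := h1 x
        tauto
      -- new commit part and its invariant
      have hC₁sub : C₀ ∪ commit '' i ⊆ commit '' P := by
        apply Set.union_subset hC₀
        exact Set.image_mono (hiP.trans Set.inter_subset_right)
      have hinv2 : ∀ g ∈ P, commit g ∈ C₀ ∪ commit '' i → g ∈ a.apply s := by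
        rintro g hg (h | ⟨g', hg', he⟩)
        · exact Or.inl ⟨hinv g hg h, hC₀del g hg h⟩
        · have : g' = g := hinj ((hiP.trans Set.inter_subset_right) hg') hg he
          exact Or.inr (this ▸ (hiP hg').1)
      have hs2F : a.apply s ⊆ T.F :=
        Set.union_subset (Set.diff_subset.trans hsF) haddF
      obtain ⟨π, C₁, h1, h2, h3, h4, h5, h6, h7⟩ := ih (a.apply s) (C₀ ∪ commit '' i)
        (fun b hb => hA' b (by simp [hb])) (by rw [← happly]; exact happrest)
        hs2F hC₁sub hinv2
      refine ⟨a :: π, C₁, ?_, ⟨⟨hApos, hAneg⟩, h2⟩, ?_, h4, ?_, h6, h7⟩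
      · rintro b hb
        rcases List.mem_cons.mp hb with rfl | hb
        · exact ha
        · exact h1 b hb
      · have hc : (simAction commit P a i).cost = a.cost := rfl
        simp only [planCost, List.map_cons, List.sum_cons] at h3 ⊢
        rw [h3, hc]
      · have hseq : seqResult (s ∪ C₀) (simAction commit P a i :: rest') =
            seqResult ((simAction commit P a i).apply (s ∪ C₀)) rest' := rfl
        rw [hseq, happly]
        exact h5

/-- Equality of optimal plan costs: if `P` is solvable, the minimum cost over all
plans of `P` equals the minimum cost over all plans of `P_c`. -/
theorem commit_compilation_optimal_cost_eq {α : Type*} (T : StripsTask α) (commit : α → α)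
    (hwf : T.WellFormed) (hfresh : FreshCommit T commit)
    (h : T.Solvable) :
    sInf (planCost '' {π : List (StripsAction α) | T.IsPlan π}) =
      sInf (planCost '' {π' : List (StripsAction α) | (commitTask T commit).IsPlan π'}) := by
  have hIF : T.I ⊆ T.F := hwf.2.2.1
  have hGF : T.G ⊆ T.F := hwf.2.2.2.1
  have himg : planCost '' {π : List (StripsAction α) | T.IsPlan π} =
      planCost '' {π' : List (StripsAction α) | (commitTask T commit).IsPlan π'} := by
    apply Set.Subset.antisymm
    · rintro x ⟨π, hπ, rfl⟩
      obtain ⟨hA, happ, hG⟩ := hπ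
      have hPG : pending T ⊆ T.G := fun g hg => hg.1.1
      have hPI : ∀ g ∈ pending T, g ∉ T.I := fun g hg => hg.1.2
      obtain ⟨π', h1, h2, h3, h4⟩ := commit_forward hwf hfresh π T.I ∅ hA happ hIF
        (by simp) (by simp) (by simp) (fun g hg => hG (hPG hg))
      refine ⟨π', ⟨h1, ?_, ?_⟩, h3⟩
      · show SeqApplicable T.I π'
        simpa using h2
      · show (T.G \ pending T) ∪ commit '' pending T ⊆ seqResult T.I π'
        have h4' : seqResult T.I π' =
            seqResult T.I π ∪ commit '' {g | g ∈ pending T ∧ ∃ b ∈ π, g ∈ b.add} := by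
          have : seqResult (T.I ∪ commit '' ∅) π' = seqResult T.I π' := by simp
          rw [← this, h4]
          congr 1
          ext g
          simp
        rw [h4']
        rintro x (hx | ⟨g, hg, rfl⟩)
        · exact Or.inl (hG hx.1)
        · refine Or.inr ⟨g, ⟨hg, ?_⟩, rfl⟩
          by_contra hno
          push_neg at hno
          exact absent_persist π T.I (hPI g hg) hno (hG (hPG hg))
    · rintro x ⟨π', hπ', rfl⟩
      obtain ⟨hA', happ', hG'⟩ := hπ'
      obtain ⟨π, C₁, h1, h2, h3, hC₁, hres, hinvf, hresF⟩ := commit_backward hwf hfresh π'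
        T.I ∅ hA' (by rw [Set.union_empty]; exact happ') hIF (by simp) (by simp)
      rw [Set.union_empty] at hres
      refine ⟨π, ⟨h1, h2, ?_⟩, h3⟩
      intro g hg
      have hG'' : (T.G \ pending T) ∪ commit '' pending T ⊆ seqResult T.I π ∪ C₁ := by
        rw [← hres]; exact hG'
      by_cases hp : g ∈ pending T
      · have : commit g ∈ seqResult T.I π ∪ C₁ := hG'' (Or.inr ⟨g, hp, rfl⟩)
        rcases this with h | h
        · exact absurd (hresF h) (hfresh.2 g hp)
        · exact hinvf g hp h
      · have : g ∈ seqResult T.I π ∪ C₁ := hG'' (Or.inl ⟨hg, hp⟩)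
        rcases this with h | h
        · exact h
        · obtain ⟨y, hy, he⟩ := hC₁ h
          exact absurd (hGF hg) (he ▸ hfresh.2 y hy)
  rw [himg]
end

section
/- One-step persistence of committed goals: for every pending goal g ∈ Ḡ, every state s ⊆ F ∪ F' with g ∈ s and g-commit ∈ s, and every action a' ∈ A_c applicable in s, it holds that g ∈ γ(s, a') and g-commit ∈ γ(s, a'). -/
variable {α : Type*}

/-- One-step persistence of committed goals: if a pending goal `g` and its commit
fluent both hold in `s`, they both hold after applying any applicable `a' ∈ A_c`. -/
theorem committed_goal_one_step_persistence {α : Type*} (T : StripsTask α) (commit : α → α)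
    (hwf : T.WellFormed) (hfresh : FreshCommit T commit)
    (g : α) (hg : g ∈ pending T)
    (s : Set α) (hs : s ⊆ (commitTask T commit).F)
    (hgs : g ∈ s) (hcs : commit g ∈ s)
    (a' : StripsAction α) (ha' : a' ∈ (commitTask T commit).A)
    (happ : a'.Applicable s) :
    g ∈ a'.apply s ∧ commit g ∈ a'.apply s := by
  obtain ⟨a, haA, hcase⟩ := ha'
  obtain ⟨hpre, hneg⟩ := happ
  have hwfa := hwf.2.2.2.2 a haA
  have hcgF : commit g ∉ T.F := hfresh.2 g hg
  have hcgdel : commit g ∉ a.del := fun h => hcgF (hwfa.2.2.2.1 h)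
  have hnegmem : ∀ x ∈ a'.preNeg, x ∉ s := fun x hx hxs =>
    Set.eq_empty_iff_forall_notMem.mp hneg x ⟨hx, hxs⟩
  have key : a'.del = a.del ∧ g ∉ a.del := by
    rcases hcase with ⟨hne, hdel0, i, hi, rfl⟩ | ⟨hadd0, hne, rfl⟩ |
        ⟨hne1, hne2, j, hj, rfl⟩ | ⟨h1, h2, rfl⟩
    · exact ⟨rfl, fun h => Set.eq_empty_iff_forall_notMem.mp hdel0 g ⟨h, hg⟩⟩
    · refine ⟨rfl, fun h => ?_⟩
      have : commit g ∈ (forceCommitAction commit (pending T) a).preNeg :=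
        Set.mem_union_right _ ⟨g, ⟨h, hg⟩, rfl⟩
      exact hnegmem _ this hcs
    · refine ⟨rfl, fun h => ?_⟩
      have : commit g ∈ (simAction commit (pending T) a j).preNeg :=
        Set.mem_union_right _ ⟨g, ⟨h, hg⟩, rfl⟩
      exact hnegmem _ this hcs
    · exact ⟨rfl, fun h => Set.eq_empty_iff_forall_notMem.mp h2 g ⟨h, hg⟩⟩
  constructor
  · exact Set.mem_union_left _ ⟨hgs, key.1 ▸ key.2⟩
  · exact Set.mem_union_left _ ⟨hcs, key.1 ▸ hcgdel⟩
end

section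
/- Reachability invariant of the commit compilation: for every action sequence π' over A_c that is applicable in the initial state I of the commit task P_c, and for every pending goal g ∈ Ḡ, if g-commit ∈ Γ(I, π') then g ∈ Γ(I, π'). -/
variable {α : Type*}

/-- Auxiliary: the invariant is preserved by one compiled action. -/
lemma commit_step_invariant {α : Type*} (T : StripsTask α) (commit : α → α)
    (hwf : T.WellFormed) (hfresh : FreshCommit T commit)
    (a' : StripsAction α) (ha : a' ∈ (commitTask T commit).A)
    (s : Set α) (happ : a'.Applicable s)
    (hinv : ∀ g ∈ pending T, commit g ∈ s → g ∈ s) :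
    ∀ g ∈ pending T, commit g ∈ a'.apply s → g ∈ a'.apply s := by
  obtain ⟨a, haA, hcase⟩ := ha
  obtain ⟨-, -, -, -, hacts⟩ := hwf
  obtain ⟨-, -, haddF, hdelF, -⟩ := hacts a haA
  obtain ⟨hinj, hfr⟩ := hfresh
  intro g hg hcg
  have hgF : commit g ∉ T.F := hfr g hg
  have hcadd : commit g ∉ a.add := fun h => hgF (haddF h)
  have himg : ∀ i : Set α, i ⊆ a.add ∩ pending T → commit g ∈ commit '' i → g ∈ a.add := by
    intro i hi ⟨x, hx, hxe⟩
    have : x = g := hinj (hi hx).2 hg hxe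
    exact this ▸ (hi hx).1
  rcases hcase with ⟨hadd, hdel, i, hi, rfl⟩ | ⟨hadd, hdel, rfl⟩ | ⟨hadd, hdel, j, hj, rfl⟩ | ⟨hadd, hdel, rfl⟩
  · rcases hcg with ⟨hs, -⟩ | hs
    · refine Or.inl ⟨hinv g hg hs, fun hgd => ?_⟩
      exact (Set.eq_empty_iff_forall_notMem.mp hdel g ⟨hgd, hg⟩)
    · rcases hs with hs | hs
      · exact absurd hs hcadd
      · exact Or.inr (Or.inl (himg i hi hs))
  · rcases hcg with ⟨hs, -⟩ | hs
    · refine Or.inl ⟨hinv g hg hs, fun hgd => ?_⟩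
      have : commit g ∈ (forceCommitAction commit (pending T) a).preNeg ∩ s :=
        ⟨Or.inr ⟨g, ⟨hgd, hg⟩, rfl⟩, hs⟩
      exact Set.eq_empty_iff_forall_notMem.mp happ.2 _ this
    · exact absurd hs hcadd
  · rcases hcg with ⟨hs, -⟩ | hs
    · refine Or.inl ⟨hinv g hg hs, fun hgd => ?_⟩
      have : commit g ∈ (simAction commit (pending T) a j).preNeg ∩ s :=
        ⟨Or.inr ⟨g, ⟨hgd, hg⟩, rfl⟩, hs⟩
      exact Set.eq_empty_iff_forall_notMem.mp happ.2 _ this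
    · rcases hs with hs | hs
      · exact absurd hs hcadd
      · exact Or.inr (Or.inl (himg j hj hs))
  · rcases hcg with ⟨hs, -⟩ | hs
    · refine Or.inl ⟨hinv g hg hs, fun hgd => ?_⟩
      exact (Set.eq_empty_iff_forall_notMem.mp hdel g ⟨hgd, hg⟩)
    · exact absurd hs hcadd

/-- Auxiliary: the invariant propagates along an applicable sequence. -/
lemma commit_seq_invariant {α : Type*} (T : StripsTask α) (commit : α → α)
    (hwf : T.WellFormed) (hfresh : FreshCommit T commit) :
    ∀ (π' : List (StripsAction α)) (s : Set α),
      (∀ a' ∈ π', a' ∈ (commitTask T commit).A) → SeqApplicable s π' →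
      (∀ g ∈ pending T, commit g ∈ s → g ∈ s) →
      ∀ g ∈ pending T, commit g ∈ seqResult s π' → g ∈ seqResult s π'
  | [], s, _, _, hinv => hinv
  | a' :: π', s, hmem, ⟨ha, happ⟩, hinv =>
    commit_seq_invariant T commit hwf hfresh π' (a'.apply s)
      (fun b hb => hmem b (List.mem_cons_of_mem _ hb)) happ
      (commit_step_invariant T commit hwf hfresh a' (hmem a' List.mem_cons_self) s ha hinv)

/-- Reachability invariant: along any action sequence over `A_c` applicable in the
initial state of `P_c`, a commit fluent in the final state implies its goal holds. -/
theorem commit_reachability_invariant {α : Type*} (T : StripsTask α) (commit : α → α)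
    (hwf : T.WellFormed) (hfresh : FreshCommit T commit)
    (π' : List (StripsAction α)) (hmem : ∀ a' ∈ π', a' ∈ (commitTask T commit).A)
    (happ : SeqApplicable (commitTask T commit).I π') :
    ∀ g ∈ pending T,
      commit g ∈ seqResult (commitTask T commit).I π' →
        g ∈ seqResult (commitTask T commit).I π' := by
  refine commit_seq_invariant T commit hwf hfresh π' _ hmem happ ?_
  intro g hg hcg
  exact absurd (hwf.2.2.1 hcg) (hfresh.2 g hg)
end

section
/- Projection lemma for the commit compilation: for every a' ∈ A_c and every state s ⊆ F ∪ F', if a' is applicable in s, then its original counterpart ρ(a') ∈ A is applicable in s ∩ F, and γ(s ∩ F, ρ(a')) = γ(s, a') ∩ F. -/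
variable {α : Type*}

/-- Projection lemma: if a compiled action `a'` (with `ρ(a') = a`) is applicable in a
state `s ⊆ F ∪ F'`, then `a` is applicable in `s ∩ F` and
`γ(s ∩ F, a) = γ(s, a') ∩ F`. -/
theorem commit_compilation_projection {α : Type*} (T : StripsTask α) (commit : α → α)
    (hwf : T.WellFormed) (hfresh : FreshCommit T commit)
    (a' a : StripsAction α) (hcf : CompiledFrom T commit a' a)
    (s : Set α) (hs : s ⊆ (commitTask T commit).F)
    (happ : a'.Applicable s) :
    a.Applicable (s ∩ T.F) ∧ a.apply (s ∩ T.F) = a'.apply s ∩ T.F := by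
  obtain ⟨ha, hcases⟩ := hcf
  obtain ⟨hpre, hneg, hadd, hdel, -⟩ := hwf.2.2.2.2 a ha
  -- common abstraction
  have key : ∀ X : Set α, X ⊆ pending T →
      a'.prePos = a.prePos → a.preNeg ⊆ a'.preNeg →
      a'.add = a.add ∪ commit '' X → a'.del = a.del →
      a.Applicable (s ∩ T.F) ∧ a.apply (s ∩ T.F) = a'.apply s ∩ T.F := by
    intro X hX h1 h2 h3 h4
    have hXF : commit '' X ∩ T.F = ∅ := by
      apply Set.eq_empty_iff_forall_notMem.2
      rintro x ⟨⟨g, hg, rfl⟩, hxF⟩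
      exact hfresh.2 g (hX hg) hxF
    constructor
    · constructor
      · exact Set.subset_inter (h1 ▸ happ.1) hpre
      · apply Set.eq_empty_iff_forall_notMem.2
        rintro x ⟨hx1, hx2, -⟩
        exact Set.eq_empty_iff_forall_notMem.1 happ.2 x ⟨h2 hx1, hx2⟩
    · ext x
      simp only [StripsAction.apply, h3, h4, Set.mem_union, Set.mem_diff, Set.mem_inter_iff]
      constructor
      · rintro (⟨⟨hxs, hxF⟩, hxd⟩ | hxa)
        · exact ⟨Or.inl ⟨hxs, hxd⟩, hxF⟩
        · exact ⟨Or.inr (Or.inl hxa), hadd hxa⟩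
      · rintro ⟨(⟨hxs, hxd⟩ | hxa | hxc), hxF⟩
        · exact Or.inl ⟨⟨hxs, hxF⟩, hxd⟩
        · exact Or.inr hxa
        · exact absurd ⟨hxc, hxF⟩ (Set.eq_empty_iff_forall_notMem.1 hXF x)
  rcases hcases with ⟨-, -, i, hi, rfl⟩ | ⟨-, -, rfl⟩ | ⟨-, -, j, hj, rfl⟩ | ⟨-, -, rfl⟩
  · exact key i (hi.trans Set.inter_subset_right) rfl Set.subset_union_left rfl rfl
  · exact key ∅ (Set.empty_subset _) rfl Set.subset_union_left
      (by simp [forceCommitAction]) rfl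
  · exact key j (hj.trans Set.inter_subset_right) rfl
      ((Set.subset_union_left).trans Set.subset_union_left) rfl rfl
  · exact key ∅ (Set.empty_subset _) rfl subset_rfl (by simp) rfl
end

section
/- Lifting lemma for the commit compilation: for every original action a ∈ A and every state s ⊆ F ∪ F', if a is applicable in s ∩ F and g-commit ∉ s for every g ∈ del(a) ∩ Ḡ, then there exists a compiled action a' ∈ A_c with ρ(a') = a such that a' is applicable in s and γ(s, a') ∩ F = γ(s ∩ F, a). -/
variable {α : Type*}

/-- Lifting lemma: if `a ∈ A` is applicable in `s ∩ F` and no commit fluent of a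
pending goal deleted by `a` is in `s`, then some compiled action `a'` with
`ρ(a') = a` is applicable in `s` and `γ(s, a') ∩ F = γ(s ∩ F, a)`. -/
theorem commit_compilation_lifting {α : Type*} (T : StripsTask α) (commit : α → α)
    (hwf : T.WellFormed) (hfresh : FreshCommit T commit)
    (a : StripsAction α) (ha : a ∈ T.A)
    (s : Set α) (hs : s ⊆ (commitTask T commit).F)
    (happ : a.Applicable (s ∩ T.F))
    (hno : ∀ g ∈ a.del ∩ pending T, commit g ∉ s) :
    ∃ a' : StripsAction α, CompiledFrom T commit a' a ∧ a'.Applicable s ∧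
      a'.apply s ∩ T.F = a.apply (s ∩ T.F) := by
  obtain ⟨hsub, hdisj⟩ := happ
  obtain ⟨-, -, -, -, hA⟩ := hwf
  obtain ⟨hppF, hpnF, haddF, hdelF, -⟩ := hA a ha
  have hprepos : a.prePos ⊆ s := fun x hx => (hsub hx).1
  have hpreneg : a.preNeg ∩ s = ∅ := by
    ext x
    simp only [Set.mem_inter_iff, Set.mem_empty_iff_false, iff_false, not_and]
    intro hx hxs
    have : x ∈ a.preNeg ∩ (s ∩ T.F) := ⟨hx, hxs, hpnF hx⟩
    rw [hdisj] at this; exact this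
  have hdelc : commit '' (a.del ∩ pending T) ∩ s = ∅ := by
    ext x
    simp only [Set.mem_inter_iff, Set.mem_image, Set.mem_empty_iff_false, iff_false,
      not_and]
    rintro ⟨g, hg, rfl⟩ hxs; exact hno g hg hxs
  have happlyF : ((s \ a.del) ∪ a.add) ∩ T.F = a.apply (s ∩ T.F) := by
    ext x
    simp only [StripsAction.apply, Set.mem_inter_iff, Set.mem_union, Set.mem_diff]
    constructor
    · rintro ⟨h | h, hF⟩
      · exact Or.inl ⟨⟨h.1, hF⟩, h.2⟩
      · exact Or.inr h
    · rintro (⟨⟨hs', hF⟩, hd⟩ | h)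
      · exact ⟨Or.inl ⟨hs', hd⟩, hF⟩
      · exact ⟨Or.inr h, haddF h⟩
  by_cases h1 : a.add ∩ pending T = ∅ <;> by_cases h2 : a.del ∩ pending T = ∅
  · exact ⟨a, ⟨ha, Or.inr (Or.inr (Or.inr ⟨h1, h2, rfl⟩))⟩, ⟨hprepos, hpreneg⟩, happlyF⟩
  · refine ⟨forceCommitAction commit (pending T) a,
      ⟨ha, Or.inr (Or.inl ⟨h1, h2, rfl⟩)⟩, ⟨hprepos, ?_⟩, ?_⟩
    · simp only [forceCommitAction, Set.union_inter_distrib_right, hpreneg, hdelc,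
        Set.union_empty]
    · simpa [forceCommitAction, StripsAction.apply] using happlyF
  · refine ⟨commitAction commit a ∅,
      ⟨ha, Or.inl ⟨h1, h2, ∅, Set.empty_subset _, rfl⟩⟩, ⟨hprepos, ?_⟩, ?_⟩
    · simp [commitAction, StripsAction.Applicable, hpreneg]
    · simpa [commitAction, StripsAction.apply] using happlyF
  · refine ⟨simAction commit (pending T) a ∅,
      ⟨ha, Or.inr (Or.inr (Or.inl ⟨h1, h2, ∅, Set.empty_subset _, rfl⟩))⟩,
      ⟨hprepos, ?_⟩, ?_⟩
    · simp [simAction, Set.union_inter_distrib_right, hpreneg, hdelc]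
    · simpa [simAction, StripsAction.apply] using happlyF
end
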